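/- (Serial uniform sampling parameters.) Let κ_i > 0, ρ ∈ (0,1), κ̃_i = 1 + κ_i/ρ², μ_g, μ_i > 0, ‖A_i‖² = κ_i μ_g μ_i, and uniform probabilities p_i = 1/n with n ≥ 2. Then the rate θ_uni = 1 − 2/(n + n max_j √κ̃_j) together with the step sizes σ_i = μ_i^{-1} / (max_j √κ̃_j − 1) and τ = μ_g^{-1} / (n − 2 + n max_j √κ̃_j) satisfies the serial-sampling step size conditions: θ_uni ≥ 1/(1 + 2 τ μ_g), θ_uni ≥ max_i ( 1 − 2 σ_i μ_i p_i / (1 + 2 σ_i μ_i) ), and max_i τ σ_i ‖A_i‖² θ_uni ≤ ρ² p_i. -/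

import Mathlib

/-- Serial uniform sampling parameters.
With condition numbers `κ_i = ‖A_i‖²/(μ_g μ_i) > 0`, `κ̃_i = 1 + κ_i/ρ²`,
uniform probabilities `p_i = 1/n` (`n ≥ 2`), the rate
`θ_uni = 1 − 2/(n + n max_j √κ̃_j)` together with the step sizes
`σ_i = μ_i⁻¹/(max_j √κ̃_j − 1)` and `τ = μ_g⁻¹/(n − 2 + n max_j √κ̃_j)`
satisfies the serial-sampling step size conditions
`θ_uni ≥ 1/(1 + 2 τ μ_g)`, `θ_uni ≥ max_i (1 − 2 σ_i μ_i p_i/(1 + 2 σ_i μ_i))`,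
and `max_i τ σ_i ‖A_i‖² θ_uni ≤ ρ² p_i`. -/
theorem spdhg_serial_uniform_parameters {n : ℕ} (hn : 2 ≤ n)
    (κ μ normA : Fin n → ℝ) (μg ρ : ℝ)
    (hκ : ∀ i, 0 < κ i) (hρ : ρ ∈ Set.Ioo (0 : ℝ) 1) (hμg : 0 < μg) (hμ : ∀ i, 0 < μ i)
    (hA : ∀ i, normA i ^ 2 = κ i * μg * μ i) :
    let m : ℝ := Finset.univ.sup' (Finset.univ_nonempty_iff.mpr ⟨⟨0, by omega⟩⟩)
      (fun j => Real.sqrt (1 + κ j / ρ ^ 2))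
    let θuni : ℝ := 1 - 2 / ((n : ℝ) + (n : ℝ) * m)
    let σ : Fin n → ℝ := fun i => (μ i)⁻¹ / (m - 1)
    let τ : ℝ := μg⁻¹ / ((n : ℝ) - 2 + (n : ℝ) * m)
    (1 / (1 + 2 * τ * μg) ≤ θuni) ∧
    (∀ i, 1 - 2 * σ i * μ i * (1 / (n : ℝ)) / (1 + 2 * σ i * μ i) ≤ θuni) ∧
    (∀ i, τ * σ i * normA i ^ 2 * θuni ≤ ρ ^ 2 * (1 / (n : ℝ))) := by
  intro m θuni σ τ
  obtain ⟨hρ0, hρ1⟩ := hρ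
  have hρ2 : 0 < ρ ^ 2 := by positivity
  have hsq : ∀ j : Fin n, 1 < Real.sqrt (1 + κ j / ρ ^ 2) := by
    intro j
    have h1 : (1:ℝ) < 1 + κ j / ρ ^ 2 := by
      have := hκ j; have : 0 < κ j / ρ ^ 2 := by positivity
      linarith
    nlinarith [Real.sq_sqrt (by positivity : (0:ℝ) ≤ 1 + κ j / ρ ^ 2),
      Real.sqrt_nonneg (1 + κ j / ρ ^ 2)]
  have hle : ∀ j : Fin n, Real.sqrt (1 + κ j / ρ ^ 2) ≤ m := by
    intro j
    show _ ≤ Finset.univ.sup' _ _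
    exact Finset.le_sup' (fun j => Real.sqrt (1 + κ j / ρ ^ 2)) (Finset.mem_univ j)
  have hm1 : (1:ℝ) < m := lt_of_lt_of_le (hsq ⟨0, by omega⟩) (hle _)
  have hn2 : (2:ℝ) ≤ (n:ℝ) := by exact_mod_cast hn
  have hD1 : (0:ℝ) < (n:ℝ) - 2 + (n:ℝ) * m := by nlinarith
  have hD2 : (0:ℝ) < (n:ℝ) + (n:ℝ) * m := by nlinarith
  have hD1' := hD1.ne'
  have hD2' := hD2.ne'
  have hμg' := hμg.ne'
  have hmm : m - 1 ≠ 0 := by linarith [hm1]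
  refine ⟨?_, ?_, ?_⟩
  · have : 1 / (1 + 2 * τ * μg) = θuni := by
      show 1 / (1 + 2 * (μg⁻¹ / ((n:ℝ) - 2 + (n:ℝ) * m)) * μg) = 1 - 2 / ((n:ℝ) + (n:ℝ) * m)
      have hX : 1 + 2 * (μg⁻¹ / ((n:ℝ) - 2 + (n:ℝ) * m)) * μg
          = ((n:ℝ) + (n:ℝ) * m) / ((n:ℝ) - 2 + (n:ℝ) * m) := by
        field_simp; ring
      rw [hX, one_div_div, eq_sub_iff_add_eq, ← add_div,
        div_eq_one_iff_eq hD2']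
      ring
    linarith [this.le]
  · intro i
    have hμi' := (hμ i).ne'
    have : 1 - 2 * σ i * μ i * (1 / (n : ℝ)) / (1 + 2 * σ i * μ i) = θuni := by
      show 1 - 2 * ((μ i)⁻¹ / (m - 1)) * μ i * (1 / (n : ℝ)) /
          (1 + 2 * ((μ i)⁻¹ / (m - 1)) * μ i) = 1 - 2 / ((n:ℝ) + (n:ℝ) * m)
      have h1 : 2 * ((μ i)⁻¹ / (m - 1)) * μ i = 2 / (m - 1) := by field_simp
      rw [h1]
      have h2 : 1 + 2 / (m - 1) = (m + 1) / (m - 1) := by field_simp; ring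
      rw [h2]
      have hm1' : m + 1 ≠ 0 := by linarith
      have hn0 : (n:ℝ) ≠ 0 := by linarith
      field_simp
      ring
    linarith [this.le]
  · intro i
    have hμi' := (hμ i).ne'
    have hkm : κ i ≤ ρ ^ 2 * (m ^ 2 - 1) := by
      have hki := hκ i
      have h1 := hle i
      have h2 : (Real.sqrt (1 + κ i / ρ ^ 2)) ^ 2 = 1 + κ i / ρ ^ 2 :=
        Real.sq_sqrt (by positivity)
      have h3 : 1 + κ i / ρ ^ 2 ≤ m ^ 2 := by
        nlinarith [Real.sqrt_nonneg (1 + κ i / ρ ^ 2)]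
      have : κ i / ρ ^ 2 ≤ m ^ 2 - 1 := by linarith
      calc κ i = (κ i / ρ ^ 2) * ρ ^ 2 := by field_simp
        _ ≤ (m ^ 2 - 1) * ρ ^ 2 := by nlinarith
        _ = ρ ^ 2 * (m ^ 2 - 1) := by ring
    have heq : τ * σ i * normA i ^ 2 * θuni = κ i / ((n:ℝ) * (m ^ 2 - 1)) := by
      show (μg⁻¹ / ((n:ℝ) - 2 + (n:ℝ) * m)) * ((μ i)⁻¹ / (m - 1)) * normA i ^ 2 *
          (1 - 2 / ((n:ℝ) + (n:ℝ) * m)) = κ i / ((n:ℝ) * (m ^ 2 - 1))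
      rw [hA i]
      have hn0 : (n:ℝ) ≠ 0 := by linarith
      have hm2 : m ^ 2 - 1 ≠ 0 := by nlinarith
      field_simp
      ring
    rw [heq]
    rw [div_le_iff₀ (by nlinarith : (0:ℝ) < (n:ℝ) * (m ^ 2 - 1))]
    have hn0 : (0:ℝ) < (n:ℝ) := by linarith
    calc κ i ≤ ρ ^ 2 * (m ^ 2 - 1) := hkm
      _ = ρ ^ 2 * (1 / (n:ℝ)) * ((n:ℝ) * (m ^ 2 - 1)) := by field_simp
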